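/- Let n ∈ ℕ and let W = {w_1, …, w_n}, M = {m_1, …, m_n}, W' = {w'_1, …, w'_n}, M' = {m'_1, …, m'_n} be pairwise disjoint sets; write w = w_1 and m' = m'_1. Given a profile P_W of partial preference lists for W over M and a profile P_M for M over W, define full preference lists on W ∪ W' over M ∪ M': the list of w_i is her list in P_W, followed by m'_i, followed by all remaining men sorted by index; the list of w'_i is m_i followed by all remaining men sorted by index; symmetrically, the list of m_j is his list in P_M, followed by w'_j, followed by all remaining women sorted by index; the list of m'_j is w_j followed by all remaining women sorted by index. Then the following are equivalent: (i) w is single in some marriage between W and M that is stable with respect to P_W and P_M; (ii) w and m' are married to each other in some perfect marriage between W ∪ W' and M ∪ M' that is stable with respect to the constructed full preference lists; (iii) w and m' are married to each other in every perfect marriage between W ∪ W' and M ∪ M' that is stable with respect to the constructed full preference lists. -/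

import Mathlib

/-- `listPref l a b`: in the (possibly partial) preference list `l`
(most-preferred first), `a` is preferred over `b`: `a` is on the list, and
either `b` is not on the list or `a` precedes `b` on it. -/
def listPref {α : Type} [DecidableEq α] (l : List α) (a b : α) : Prop :=
  a ∈ l ∧ (b ∈ l → l.idxOf a < l.idxOf b)

/-- A marriage between (a subset of) the women `Fin nw` and (a subset of) the
men `Fin nm`: `μ i = some j` means woman `i` is married to man `j`, and
`μ i = none` means woman `i` is single; no two women share a husband. -/
def IsMarriage {nw nm : ℕ} (μ : Fin nw → Option (Fin nm)) : Prop :=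
  ∀ i i' j, μ i = some j → μ i' = some j → i = i'

/-- Stability of a marriage `μ` with respect to (possibly partial) preference
lists `wL` (women's lists of men) and `mL` (men's lists of women): every married
participant is married to someone on their own list, and there is no blocking
pair, i.e. no pair `(i, j)`, with `j` on `i`'s list and `i` on `j`'s list, such
that woman `i` is single or prefers `j` over her spouse, and man `j` is single
or prefers `i` over his spouse. -/
def StableL {nw nm : ℕ} (wL : Fin nw → List (Fin nm)) (mL : Fin nm → List (Fin nw))
    (μ : Fin nw → Option (Fin nm)) : Prop :=
  (∀ i j, μ i = some j → j ∈ wL i ∧ i ∈ mL j) ∧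
  ¬∃ (i : Fin nw) (j : Fin nm),
      j ∈ wL i ∧ i ∈ mL j ∧
      (∀ j', μ i = some j' → listPref (wL i) j j') ∧
      (∀ i', μ i' = some j → listPref (mL j) i i')

/-- Append to the list `l` all the remaining elements of `Fin N`, sorted by index. -/
def completeL {N : ℕ} (l : List (Fin N)) : List (Fin N) :=
  l ++ (List.finRange N).filter (fun a => !(l.contains a))

/-- Extension of a profile `L` of partial preference lists on `Fin n` to a profile
of full preference lists on `Fin (n + n)`.  On each side, participant `i < n` is
an original participant (`w_{i+1}` resp. `m_{j+1}`) and participant `n + i` is a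
primed participant (`w'_{i+1}` resp. `m'_{j+1}`).  The full list of `w_i` is her
original list (in the same order), then `m'_i`, then all remaining men sorted by
index; the full list of `w'_i` is `m_i` followed by all remaining men sorted by
index.  The men's lists are extended by the same construction. -/
def extL (n : ℕ) (L : Fin n → List (Fin n)) : Fin (n + n) → List (Fin (n + n)) :=
  fun i =>
    if h : i.val < n then
      completeL (((L ⟨i.val, h⟩).map (Fin.castAdd n)) ++ [Fin.natAdd n ⟨i.val, h⟩])
    else
      completeL [Fin.castAdd n ⟨i.val - n, by have := i.isLt; omega⟩]

-- Auxiliary lemmas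

lemma indexOf_map_inj {α β : Type} [DecidableEq α] [DecidableEq β] {f : α → β}
    (hf : Function.Injective f) (l : List α) (a : α) :
    (l.map f).idxOf (f a) = l.idxOf a := by
  induction l with
  | nil => simp
  | cons x xs ih =>
    by_cases h : a = x
    · subst h; simp
    · rw [List.map_cons, List.idxOf_cons_ne _ (fun hc => h (hf hc.symm)),
        List.idxOf_cons_ne _ (fun hc => h hc.symm), ih]

lemma mem_completeL {N : ℕ} (l : List (Fin N)) (a : Fin N) : a ∈ completeL l := by
  by_cases h : a ∈ l
  · exact List.mem_append_left _ h
  · exact List.mem_append_right _ (by rw [List.mem_filter, List.contains_eq_any_beq]; simp [h]; exact fun x hx he => h (he ▸ hx))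

lemma nodup_completeL {N : ℕ} {l : List (Fin N)} (h : l.Nodup) : (completeL l).Nodup := by
  refine List.Nodup.append h ((List.nodup_finRange N).filter _) ?_
  intro a ha hb
  simp only [List.mem_filter, Bool.not_eq_true'] at hb
  rw [List.contains_eq_any_beq] at hb
  simp at hb
  exact hb a ha rfl

lemma idx_completeL_mem {N : ℕ} {l : List (Fin N)} {a : Fin N} (h : a ∈ l) :
    (completeL l).idxOf a = l.idxOf a :=
  List.idxOf_append_of_mem h

lemma idx_completeL_lt {N : ℕ} {l : List (Fin N)} {a b : Fin N} (ha : a ∈ l) (hb : b ∉ l) :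
    (completeL l).idxOf a < (completeL l).idxOf b := by
  unfold completeL
  rw [List.idxOf_append_of_mem ha, List.idxOf_append_of_notMem hb]
  exact lt_of_lt_of_le (List.idxOf_lt_length_iff.2 ha) (Nat.le_add_right _ _)

lemma listPref_total {α : Type} [DecidableEq α] {l : List α} {a b : α}
    (ha : a ∈ l) (hab : a ≠ b) (h : ¬ listPref l a b) : listPref l b a := by
  unfold listPref at *
  push_neg at h
  obtain ⟨hb, hle⟩ := h ha
  refine ⟨hb, fun _ => ?_⟩
  have hne : l.idxOf a ≠ l.idxOf b := fun he => hab ((List.idxOf_inj ha).1 he)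
  omega

section GS
variable {nw nm : ℕ} (wL : Fin nw → List (Fin nm)) (mL : Fin nm → List (Fin nw))

def gsHead (s : Fin nw → ℕ) (i : Fin nw) : Option (Fin nm) :=
  ((wL i).drop (s i)).head?

def gsInv (s : Fin nw → ℕ) : Prop :=
  ∀ i j, j ∈ wL i → (wL i).idxOf j < s i →
    i ∉ mL j ∨ ∃ i', gsHead wL s i' = some j ∧ i' ∈ mL j ∧
      (mL j).idxOf i' < (mL j).idxOf i

def gsBad (s : Fin nw → ℕ) : Prop :=
  ∃ i j, gsHead wL s i = some j ∧
    (i ∉ mL j ∨ ∃ i', i' ≠ i ∧ gsHead wL s i' = some j ∧ i' ∈ mL j ∧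
      (mL j).idxOf i' < (mL j).idxOf i)

lemma gsHead_some {s : Fin nw → ℕ} {i : Fin nw} {j : Fin nm}
    (h : gsHead wL s i = some j) :
    ∃ h' : s i < (wL i).length, (wL i)[s i] = j := by
  unfold gsHead at h
  rw [List.head?_drop] at h
  exact List.getElem?_eq_some_iff.1 h

lemma gsHead_mem {s : Fin nw → ℕ} {i : Fin nw} {j : Fin nm}
    (h : gsHead wL s i = some j) : j ∈ wL i := by
  obtain ⟨h1, h2⟩ := gsHead_some wL h
  exact h2 ▸ List.getElem_mem h1

lemma gsHead_idx {s : Fin nw → ℕ} {i : Fin nw} {j : Fin nm} (hnd : (wL i).Nodup)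
    (h : gsHead wL s i = some j) : (wL i).idxOf j = s i := by
  obtain ⟨h1, h2⟩ := gsHead_some wL h
  subst h2
  exact hnd.idxOf_getElem _ _
end GS

section GS2
variable {nw nm : ℕ} (wL : Fin nw → List (Fin nm)) (mL : Fin nm → List (Fin nw))

lemma gs_step (hw : ∀ i, (wL i).Nodup) {s : Fin nw → ℕ} (hs : gsInv wL mL s)
    (hbad : gsBad wL mL s) :
    ∃ s', gsInv wL mL s' ∧
      (∑ i, ((wL i).length - s' i)) < ∑ i, ((wL i).length - s i) := by
  obtain ⟨i, j, hhead, hrej⟩ := hbad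
  obtain ⟨hslt, hget⟩ := gsHead_some wL hhead
  have hjidx : (wL i).idxOf j = s i := gsHead_idx wL (hw i) hhead
  have hjmem : j ∈ wL i := gsHead_mem wL hhead
  refine ⟨Function.update s i (s i + 1), ?_, ?_⟩
  · intro a b hb hlt
    have hgs_upd : ∀ i', i' ≠ i → gsHead wL (Function.update s i (s i + 1)) i' = gsHead wL s i' := by
      intro i' hne
      unfold gsHead
      rw [Function.update_of_ne hne]
    by_cases ha : a = i
    · subst ha
      rw [Function.update_self] at hlt
      rcases Nat.lt_or_ge ((wL a).idxOf b) (s a) with hlt' | hge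
      · -- old rejected pair for a
        rcases hs a b hb hlt' with h1 | ⟨i₀, hh₀, hm₀, hi₀⟩
        · exact Or.inl h1
        · by_cases hi₀a : i₀ = a
          · subst hi₀a
            rw [hhead] at hh₀
            have hbj : b = j := (Option.some_inj.1 hh₀).symm
            subst hbj
            rcases hrej with h1 | ⟨i', hne', hh', hm', hi'⟩
            · exact absurd hm₀ h1
            · exact Or.inr ⟨i', by rw [hgs_upd i' hne']; exact hh', hm', lt_trans hi' hi₀⟩
          · exact Or.inr ⟨i₀, by rw [hgs_upd i₀ hi₀a]; exact hh₀, hm₀, hi₀⟩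
      · -- newly rejected: b = j
        have hbidx : (wL a).idxOf b = s a := by omega
        have hbj : b = j := (List.idxOf_inj hb).1 (by omega)
        subst hbj
        rcases hrej with h1 | ⟨i', hne', hh', hm', hi'⟩
        · exact Or.inl h1
        · exact Or.inr ⟨i', by rw [hgs_upd i' hne']; exact hh', hm', hi'⟩
    · rw [Function.update_of_ne ha] at hlt
      rcases hs a b hb hlt with h1 | ⟨i₀, hh₀, hm₀, hi₀⟩
      · exact Or.inl h1
      · by_cases hi₀a : i₀ = i
        · subst hi₀a
          rw [hhead] at hh₀
          have hbj : b = j := (Option.some_inj.1 hh₀).symm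
          subst hbj
          rcases hrej with h1 | ⟨i', hne', hh', hm', hi'⟩
          · exact absurd hm₀ h1
          · refine Or.inr ⟨i', ?_, hm', lt_trans hi' hi₀⟩
            unfold gsHead
            rw [Function.update_of_ne hne']
            exact hh'
        · refine Or.inr ⟨i₀, ?_, hm₀, hi₀⟩
          unfold gsHead
          rw [Function.update_of_ne hi₀a]
          exact hh₀
  · apply Finset.sum_lt_sum
    · intro k _
      by_cases hk : k = i
      · subst hk; rw [Function.update_self]; omega
      · rw [Function.update_of_ne hk]
    · exact ⟨i, Finset.mem_univ i, by rw [Function.update_self]; omega⟩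

lemma gs_reach (hw : ∀ i, (wL i).Nodup) :
    ∀ (N : ℕ) (s : Fin nw → ℕ), gsInv wL mL s →
      (∑ i, ((wL i).length - s i)) < N →
      ∃ s', gsInv wL mL s' ∧ ¬ gsBad wL mL s' := by
  intro N
  induction N with
  | zero => intro s _ h; exact absurd h (Nat.not_lt_zero _)
  | succ N ih =>
    intro s hs hlt
    by_cases hb : gsBad wL mL s
    · obtain ⟨s', hs', hlt'⟩ := gs_step wL mL hw hs hb
      exact ih s' hs' (by omega)
    · exact ⟨s, hs, hb⟩

theorem exists_stable (hw : ∀ i, (wL i).Nodup) (hm : ∀ j, (mL j).Nodup) :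
    ∃ μ, IsMarriage μ ∧ StableL wL mL μ := by
  obtain ⟨s, hinv, hgood⟩ := gs_reach wL mL hw ((∑ i, (wL i).length) + 1) (fun _ => 0)
    (fun i j _ h => absurd h (Nat.not_lt_zero _))
    (by simp only [Nat.sub_zero]; omega)
  refine ⟨gsHead wL s, ?_, ?_, ?_⟩
  · intro i i' j h h'
    by_contra hne
    have hi : i ∈ mL j := by
      by_contra hmem
      exact hgood ⟨i, j, h, Or.inl hmem⟩
    have hi' : i' ∈ mL j := by
      by_contra hmem
      exact hgood ⟨i', j, h', Or.inl hmem⟩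
    have hidx : (mL j).idxOf i ≠ (mL j).idxOf i' :=
      fun he => hne ((List.idxOf_inj hi).1 he)
    rcases Nat.lt_or_ge ((mL j).idxOf i) ((mL j).idxOf i') with hlt | hge
    · exact hgood ⟨i', j, h', Or.inr ⟨i, hne, h, hi, hlt⟩⟩
    · exact hgood ⟨i, j, h, Or.inr ⟨i', fun he => hne he.symm, h', hi', by omega⟩⟩
  · intro i j h
    refine ⟨gsHead_mem wL h, ?_⟩
    by_contra hmem
    exact hgood ⟨i, j, h, Or.inl hmem⟩
  · rintro ⟨i, j, hjw, him, hwc, hmc⟩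
    rcases Nat.lt_or_ge ((wL i).idxOf j) (s i) with hlt | hge
    · rcases hinv i j hjw hlt with h1 | ⟨i', hh', hm', hi'⟩
      · exact h1 him
      · have := (hmc i' hh').2 hm'
        omega
    · have hsl : s i < (wL i).length := lt_of_le_of_lt hge (List.idxOf_lt_length_iff.2 hjw)
      have hhead : gsHead wL s i = some ((wL i)[s i]) := by
        unfold gsHead
        rw [List.head?_drop]
        exact List.getElem?_eq_getElem hsl
      have hidx : (wL i).idxOf ((wL i)[s i]) = s i := (hw i).idxOf_getElem _ _
      have := (hwc _ hhead).2 (List.getElem_mem hsl)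
      omega
end GS2

lemma stable_perfect {N : ℕ} (wL mL : Fin N → List (Fin N))
    (hfw : ∀ i a, a ∈ wL i) (hfm : ∀ j a, a ∈ mL j)
    {μ : Fin N → Option (Fin N)} (hμ : IsMarriage μ) (hst : StableL wL mL μ) :
    (∀ i, (μ i).isSome) ∧ (∀ j, ∃ i, μ i = some j) := by
  have hA : (∀ j, ∃ i, μ i = some j) → ∀ i, (μ i).isSome := by
    intro h i
    choose f hf using h
    have hfi : Function.Injective f := by
      intro a b hab
      have h1 := hf a
      rw [hab, hf b] at h1
      exact (Option.some_inj.1 h1).symm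
    obtain ⟨j, hj⟩ := (Finite.injective_iff_surjective.1 hfi) i
    rw [← hj, hf j]
    rfl
  by_cases h1 : ∀ j, ∃ i, μ i = some j
  · exact ⟨hA h1, h1⟩
  · exfalso
    push_neg at h1
    obtain ⟨j, hj⟩ := h1
    have hall : ∀ i, (μ i).isSome := by
      intro i
      rw [← Option.ne_none_iff_isSome]
      intro hnone
      refine hst.2 ⟨i, j, hfw i j, hfm j i, ?_, ?_⟩
      · intro j' h'
        rw [hnone] at h'
        cases h'
      · intro i' h'
        exact absurd h' (hj i')
    -- then μ is a bijection women -> men, so j is hit: contradiction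
    have hg : Function.Injective (fun i => (μ i).get (hall i)) := by
      intro a b hab
      simp only at hab
      apply hμ a b ((μ a).get (hall a))
      · exact (Option.some_get (hall a)).symm
      · rw [hab]
        exact (Option.some_get (hall b)).symm
    obtain ⟨i, hi⟩ := (Finite.injective_iff_surjective.1 hg) j
    apply hj i
    simp only at hi
    rw [← hi]
    exact (Option.some_get (hall i)).symm

section Ext
variable (n : ℕ)

lemma extL_castAdd (L : Fin n → List (Fin n)) (i : Fin n) :
    extL n L (Fin.castAdd n i) = completeL ((L i).map (Fin.castAdd n) ++ [Fin.natAdd n i]) := by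
  unfold extL
  rw [dif_pos (show (Fin.castAdd n i).val < n from i.isLt)]
  rfl

lemma extL_natAdd (L : Fin n → List (Fin n)) (i : Fin n) :
    extL n L (Fin.natAdd n i) = completeL [Fin.castAdd n i] := by
  unfold extL
  rw [dif_neg (show ¬ (Fin.natAdd n i).val < n by simp)]
  congr 2
  ext
  simp

lemma mem_extL (L : Fin n → List (Fin n)) (x : Fin (n + n)) (a : Fin (n + n)) :
    a ∈ extL n L x := by
  unfold extL
  split <;> exact mem_completeL _ _

lemma castAdd_ne_natAdd (a b : Fin n) : Fin.castAdd n a ≠ Fin.natAdd n b := by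
  intro h
  have := congrArg Fin.val h
  simp at this
  omega

lemma castAdd_inj : Function.Injective (Fin.castAdd n : Fin n → Fin (n + n)) := by
  intro a b h
  have := congrArg Fin.val h
  simp at this
  exact Fin.ext this

lemma nodup_extL (L : Fin n → List (Fin n)) (hL : ∀ i, (L i).Nodup) (x : Fin (n + n)) :
    (extL n L x).Nodup := by
  unfold extL
  split
  · apply nodup_completeL
    refine List.Nodup.append ((hL _).map (castAdd_inj n)) (List.nodup_singleton _) ?_
    intro a ha hb
    rw [List.mem_singleton] at hb
    subst hb
    obtain ⟨c, _, hc⟩ := List.mem_map.1 ha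
    exact castAdd_ne_natAdd n c _ hc
  · exact nodup_completeL (List.nodup_singleton _)

-- membership in the prefix of an original woman's list
lemma mem_prefix_iff (L : Fin n → List (Fin n)) (i : Fin n) (a : Fin (n + n)) :
    a ∈ (L i).map (Fin.castAdd n) ++ [Fin.natAdd n i] ↔
      (∃ j, j ∈ L i ∧ a = Fin.castAdd n j) ∨ a = Fin.natAdd n i := by
  simp only [List.mem_append, List.mem_singleton, List.mem_map]
  constructor
  · rintro (⟨j, hj, rfl⟩ | h)
    · exact Or.inl ⟨j, hj, rfl⟩
    · exact Or.inr h
  · rintro (⟨j, hj, rfl⟩ | h)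
    · exact Or.inl ⟨j, hj, rfl⟩
    · exact Or.inr h

lemma idx_prefix_castAdd (L : Fin n → List (Fin n)) (i : Fin n) {j : Fin n} (hj : j ∈ L i) :
    ((L i).map (Fin.castAdd n) ++ [Fin.natAdd n i]).idxOf (Fin.castAdd n j)
      = (L i).idxOf j := by
  rw [List.idxOf_append_of_mem (List.mem_map_of_mem hj), indexOf_map_inj (castAdd_inj n)]

lemma idx_prefix_natAdd (L : Fin n → List (Fin n)) (i : Fin n) :
    ((L i).map (Fin.castAdd n) ++ [Fin.natAdd n i]).idxOf (Fin.natAdd n i)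
      = (L i).length := by
  rw [List.idxOf_append_of_notMem, List.idxOf_cons_self]
  · simp
  · intro h
    obtain ⟨c, _, hc⟩ := List.mem_map.1 h
    exact castAdd_ne_natAdd n c _ hc

end Ext

section Restr
variable (n : ℕ) (wL mL : Fin n → List (Fin n))

lemma natAdd_inj : Function.Injective (Fin.natAdd n : Fin n → Fin (n + n)) := by
  intro a b h
  have := congrArg Fin.val h
  simp at this
  exact Fin.ext this

lemma fin_sum_cases (x : Fin (n + n)) :
    (∃ j : Fin n, x = Fin.castAdd n j) ∨ (∃ c : Fin n, x = Fin.natAdd n c) := by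
  by_cases h : x.val < n
  · exact Or.inl ⟨⟨x.val, h⟩, Fin.ext rfl⟩
  · refine Or.inr ⟨⟨x.val - n, by have := x.isLt; omega⟩, Fin.ext ?_⟩
    simp [Fin.natAdd]
    omega

lemma notmem_prefix_ca {L : Fin n → List (Fin n)} {i j : Fin n} (hj : j ∉ L i) :
    Fin.castAdd n j ∉ (L i).map (Fin.castAdd n) ++ [Fin.natAdd n i] := by
  intro h
  rcases (mem_prefix_iff n L i _).1 h with ⟨j', hj', he⟩ | he
  · exact hj (by rwa [castAdd_inj n he])
  · exact castAdd_ne_natAdd n j i he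

lemma notmem_prefix_na {L : Fin n → List (Fin n)} {i c : Fin n} (hc : c ≠ i) :
    Fin.natAdd n c ∉ (L i).map (Fin.castAdd n) ++ [Fin.natAdd n i] := by
  intro h
  rcases (mem_prefix_iff n L i _).1 h with ⟨j', _, he⟩ | he
  · exact castAdd_ne_natAdd n j' c he.symm
  · exact hc (natAdd_inj n he)

lemma mem_prefix_na (L : Fin n → List (Fin n)) (i : Fin n) :
    Fin.natAdd n i ∈ (L i).map (Fin.castAdd n) ++ [Fin.natAdd n i] :=
  List.mem_append_right _ (List.mem_singleton_self _)

lemma mem_prefix_ca {L : Fin n → List (Fin n)} {i j : Fin n} (hj : j ∈ L i) :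
    Fin.castAdd n j ∈ (L i).map (Fin.castAdd n) ++ [Fin.natAdd n i] :=
  List.mem_append_left _ (List.mem_map_of_mem hj)

def restr {n : ℕ} (μ'' : Fin (n + n) → Option (Fin (n + n))) : Fin n → Option (Fin n) :=
  fun i => (μ'' (Fin.castAdd n i)).bind
    (fun j => if h : j.val < n then some ⟨j.val, h⟩ else none)

lemma restr_eq_some {n : ℕ} (μ'' : Fin (n + n) → Option (Fin (n + n))) (i j : Fin n) :
    restr μ'' i = some j ↔ μ'' (Fin.castAdd n i) = some (Fin.castAdd n j) := by
  unfold restr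
  cases hμ : μ'' (Fin.castAdd n i) with
  | none => simp
  | some x =>
    simp only [Option.bind_some]
    constructor
    · intro h
      split at h
      · next hx =>
        obtain rfl : (⟨x.val, hx⟩ : Fin n) = j := Option.some_inj.1 h
        exact congrArg some (Fin.ext rfl)
      · cases h
    · intro h
      obtain rfl : x = Fin.castAdd n j := Option.some_inj.1 h
      rw [dif_pos (show (Fin.castAdd n j).val < n from j.isLt)]
      exact congrArg some (Fin.ext rfl)

lemma restr_eq_none {n : ℕ} (μ'' : Fin (n + n) → Option (Fin (n + n))) (i c : Fin n)
    (h : μ'' (Fin.castAdd n i) = some (Fin.natAdd n c)) : restr μ'' i = none := by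
  unfold restr
  rw [h]
  simp only [Option.bind_some]
  rw [dif_neg]
  simp [Fin.natAdd]

theorem restr_stable {μ'' : Fin (n + n) → Option (Fin (n + n))}
    (hμ : IsMarriage μ'') (hst : StableL (extL n wL) (extL n mL) μ'') :
    IsMarriage (restr μ'') ∧ StableL wL mL (restr μ'') ∧
    (∀ i c, μ'' (Fin.castAdd n i) = some (Fin.natAdd n c) → c = i) := by
  -- p1 : original-original couples are on each other's lists
  have p1 : ∀ i j, μ'' (Fin.castAdd n i) = some (Fin.castAdd n j) → j ∈ wL i ∧ i ∈ mL j := by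
    intro i j hij
    constructor
    · by_contra hjw
      refine hst.2 ⟨Fin.castAdd n i, Fin.natAdd n i, mem_extL n wL _ _, mem_extL n mL _ _, ?_, ?_⟩
      · intro j'' h''
        rw [hij] at h''
        obtain rfl : Fin.castAdd n j = j'' := Option.some_inj.1 h''
        refine ⟨mem_extL n wL _ _, fun _ => ?_⟩
        rw [extL_castAdd]
        exact idx_completeL_lt (mem_prefix_na n wL i) (notmem_prefix_ca n hjw)
      · intro i'' h''
        have hne : i'' ≠ Fin.castAdd n i := by
          intro he
          subst he
          rw [hij] at h''
          exact castAdd_ne_natAdd n j i (Option.some_inj.1 h'')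
        refine ⟨mem_extL n mL _ _, fun _ => ?_⟩
        rw [extL_natAdd]
        exact idx_completeL_lt (List.mem_singleton_self _)
          (by simp only [List.mem_singleton]; exact fun he => hne he)
    · by_contra him
      refine hst.2 ⟨Fin.natAdd n j, Fin.castAdd n j, mem_extL n wL _ _, mem_extL n mL _ _, ?_, ?_⟩
      · intro j'' h''
        have hne : j'' ≠ Fin.castAdd n j := by
          intro he
          subst he
          have := hμ _ _ _ h'' hij
          exact castAdd_ne_natAdd n i j this.symm
        refine ⟨mem_extL n wL _ _, fun _ => ?_⟩
        rw [extL_natAdd]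
        exact idx_completeL_lt (List.mem_singleton_self _)
          (by simp only [List.mem_singleton]; exact fun he => hne he)
      · intro i'' h''
        obtain rfl : i'' = Fin.castAdd n i := hμ _ _ _ h'' hij
        refine ⟨mem_extL n mL _ _, fun _ => ?_⟩
        rw [extL_castAdd]
        exact idx_completeL_lt (mem_prefix_na n mL j) (notmem_prefix_ca n him)
  -- p2 : an original woman married to a primed man is married to her own primed man
  have p2 : ∀ i c, μ'' (Fin.castAdd n i) = some (Fin.natAdd n c) → c = i := by
    intro i c hic
    by_contra hne
    refine hst.2 ⟨Fin.castAdd n i, Fin.natAdd n i, mem_extL n wL _ _, mem_extL n mL _ _, ?_, ?_⟩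
    · intro j'' h''
      rw [hic] at h''
      obtain rfl : Fin.natAdd n c = j'' := Option.some_inj.1 h''
      refine ⟨mem_extL n wL _ _, fun _ => ?_⟩
      rw [extL_castAdd]
      exact idx_completeL_lt (mem_prefix_na n wL i) (notmem_prefix_na n hne)
    · intro i'' h''
      have hne' : i'' ≠ Fin.castAdd n i := by
        intro he
        subst he
        rw [hic] at h''
        exact hne (natAdd_inj n (Option.some_inj.1 h''))
      refine ⟨mem_extL n mL _ _, fun _ => ?_⟩
      rw [extL_natAdd]
      exact idx_completeL_lt (List.mem_singleton_self _)
        (by simp only [List.mem_singleton]; exact fun he => hne' he)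
  refine ⟨?_, ⟨?_, ?_⟩, p2⟩
  · intro i i' j h h'
    have h1 := (restr_eq_some μ'' i j).1 h
    have h2 := (restr_eq_some μ'' i' j).1 h'
    exact castAdd_inj n (hμ _ _ _ h1 h2)
  · intro i j h
    exact p1 i j ((restr_eq_some μ'' i j).1 h)
  · rintro ⟨i, j, hjw, him, hwc, hmc⟩
    refine hst.2 ⟨Fin.castAdd n i, Fin.castAdd n j, mem_extL n wL _ _, mem_extL n mL _ _, ?_, ?_⟩
    · intro j'' h''
      rcases fin_sum_cases n j'' with ⟨j', rfl⟩ | ⟨c, rfl⟩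
      · have hr : restr μ'' i = some j' := (restr_eq_some μ'' i j').2 h''
        have hp := hwc j' hr
        have hj'w : j' ∈ wL i := (p1 i j' h'').1
        refine ⟨mem_extL n wL _ _, fun _ => ?_⟩
        rw [extL_castAdd]
        rw [idx_completeL_mem (mem_prefix_ca n hjw), idx_completeL_mem (mem_prefix_ca n hj'w),
          idx_prefix_castAdd n wL i hjw, idx_prefix_castAdd n wL i hj'w]
        exact hp.2 hj'w
      · obtain rfl : i = c := (p2 i c h'').symm
        refine ⟨mem_extL n wL _ _, fun _ => ?_⟩
        rw [extL_castAdd]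
        rw [idx_completeL_mem (mem_prefix_ca n hjw), idx_completeL_mem (mem_prefix_na n wL i),
          idx_prefix_castAdd n wL i hjw, idx_prefix_natAdd]
        exact List.idxOf_lt_length_iff.2 hjw
    · intro i'' h''
      rcases fin_sum_cases n i'' with ⟨i', rfl⟩ | ⟨e, rfl⟩
      · have hr : restr μ'' i' = some j := (restr_eq_some μ'' i' j).2 h''
        have hp := hmc i' hr
        have hi'm : i' ∈ mL j := (p1 i' j h'').2
        refine ⟨mem_extL n mL _ _, fun _ => ?_⟩
        rw [extL_castAdd]
        rw [idx_completeL_mem (mem_prefix_ca n him), idx_completeL_mem (mem_prefix_ca n hi'm),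
          idx_prefix_castAdd n mL j him, idx_prefix_castAdd n mL j hi'm]
        exact hp.2 hi'm
      · refine ⟨mem_extL n mL _ _, fun _ => ?_⟩
        rw [extL_castAdd]
        by_cases hej : e = j
        · subst hej
          rw [idx_completeL_mem (mem_prefix_ca n him), idx_completeL_mem (mem_prefix_na n mL e),
            idx_prefix_castAdd n mL e him, idx_prefix_natAdd]
          exact List.idxOf_lt_length_iff.2 him
        · exact idx_completeL_lt (mem_prefix_ca n him) (notmem_prefix_na n hej)
end Restr

section Unique
variable {nw nm : ℕ}

theorem single_unique (wL : Fin nw → List (Fin nm)) (mL : Fin nm → List (Fin nw))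
    (hw : ∀ i, (wL i).Nodup) (hm : ∀ j, (mL j).Nodup)
    {μ μ' : Fin nw → Option (Fin nm)}
    (hμ : IsMarriage μ) (hμ' : IsMarriage μ')
    (hs : StableL wL mL μ) (hs' : StableL wL mL μ')
    {w₀ : Fin nw} {m₁ : Fin nm} (h0 : μ w₀ = none) (h1 : μ' w₀ = some m₁) : False := by
  classical
  -- forcing lemmas
  have F1 : ∀ w m, m ∈ wL w → w ∈ mL m → (∀ j', μ w = some j' → listPref (wL w) m j') →
      ∃ w', μ w' = some m ∧ ¬ listPref (mL m) w w' := by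
    intro w m hm1 hm2 h3
    by_contra hcon
    push_neg at hcon
    exact hs.2 ⟨w, m, hm1, hm2, h3, hcon⟩
  have F2 : ∀ w m, m ∈ wL w → w ∈ mL m → (∀ i', μ' i' = some m → listPref (mL m) w i') →
      ∃ m₂, μ' w = some m₂ ∧ ¬ listPref (wL w) m m₂ := by
    intro w m hm1 hm2 h3
    by_contra hcon
    push_neg at hcon
    exact hs'.2 ⟨w, m, hm1, hm2, hcon, h3⟩
  -- the state type
  let S := {p : Fin nw × Fin nm //
    μ p.1 = some p.2 ∧ ∃ mp, μ' p.1 = some mp ∧ listPref (wL p.1) mp p.2}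
  -- the step function
  have step : ∀ p : S, ∃ q : S, μ' p.val.1 = some q.val.2 := by
    rintro ⟨⟨w, m⟩, hwm, mp, hmp, hpref⟩
    obtain ⟨w', hw', hnl⟩ := F1 w mp hpref.1 (hs'.1 w mp hmp).2
      (fun j' hj' => by rw [hwm] at hj'; obtain rfl : m = j' := Option.some_inj.1 hj'; exact hpref)
    have hww : w' ≠ w := by
      intro he
      subst he
      rw [hwm] at hw'
      obtain rfl : m = mp := Option.some_inj.1 hw'
      exact absurd (hpref.2 hpref.1) (lt_irrefl _)
    have hpref' : listPref (mL mp) w' w :=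
      listPref_total (hs'.1 w mp hmp).2 (fun he => hww he.symm) hnl
    obtain ⟨m₂, hm₂, hnl₂⟩ := F2 w' mp (hs.1 w' mp hw').1 (hs.1 w' mp hw').2
      (fun i' hi' => by obtain rfl : i' = w := hμ' i' w mp hi' hmp; exact hpref')
    have hmm : mp ≠ m₂ := by
      intro he
      subst he
      exact hww (hμ' w' w mp hm₂ hmp)
    have hpref₂ : listPref (wL w') m₂ mp :=
      listPref_total (hs.1 w' mp hw').1 hmm hnl₂
    exact ⟨⟨⟨w', mp⟩, hw', m₂, hm₂, hpref₂⟩, hmp⟩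
  choose f hf using step
  have hfinj : Function.Injective f := by
    intro p q h
    have h1 := hf p
    have h2 := hf q
    rw [h] at h1
    have hpq : p.val.1 = q.val.1 := hμ' _ _ _ h1 h2
    have hpq2 : p.val.2 = q.val.2 := by
      have ha := p.property.1
      have hb := q.property.1
      rw [hpq] at ha
      rw [hb] at ha
      exact (Option.some_inj.1 ha).symm
    exact Subtype.ext (Prod.ext hpq hpq2)
  -- the base state
  have hm₁w : m₁ ∈ wL w₀ := (hs'.1 w₀ m₁ h1).1
  have hw₀m : w₀ ∈ mL m₁ := (hs'.1 w₀ m₁ h1).2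
  obtain ⟨w₁, hw₁, hnl₁⟩ := F1 w₀ m₁ hm₁w hw₀m
    (fun j' hj' => by rw [h0] at hj'; cases hj')
  have hw₁0 : w₁ ≠ w₀ := by
    intro he
    subst he
    rw [h0] at hw₁
    cases hw₁
  have hpref₁ : listPref (mL m₁) w₁ w₀ :=
    listPref_total hw₀m (fun he => hw₁0 he.symm) hnl₁
  obtain ⟨m₂, hm₂, hnl₂⟩ := F2 w₁ m₁ (hs.1 w₁ m₁ hw₁).1 (hs.1 w₁ m₁ hw₁).2
    (fun i' hi' => by obtain rfl : i' = w₀ := hμ' i' w₀ m₁ hi' h1; exact hpref₁)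
  have hmm₁ : m₁ ≠ m₂ := by
    intro he
    subst he
    exact hw₁0 (hμ' w₁ w₀ m₁ hm₂ h1)
  have hpref₂ : listPref (wL w₁) m₂ m₁ :=
    listPref_total (hs.1 w₁ m₁ hw₁).1 hmm₁ hnl₂
  let base : S := ⟨⟨w₁, m₁⟩, hw₁, m₂, hm₂, hpref₂⟩
  -- pigeonhole on the iterates
  have : Finite S := Subtype.finite
  obtain ⟨a, b, hab, heq⟩ := Finite.exists_ne_map_eq_of_infinite (fun k => f^[k] base)
  wlog hlt : a < b generalizing a b
  · exact this b a (Ne.symm hab) heq.symm (by omega)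
  have heq2 : f^[a] (f^[b - a] base) = f^[a] base := by
    rw [← Function.iterate_add_apply]
    rw [show a + (b - a) = b by omega]
    exact heq.symm
  have hbase : f^[b - a] base = base := (hfinj.iterate a) heq2
  obtain ⟨k, hk⟩ : ∃ k, b - a = k + 1 := ⟨b - a - 1, by omega⟩
  rw [hk, Function.iterate_succ_apply'] at hbase
  set t := f^[k] base with ht
  have hft := hf t
  rw [hbase] at hft
  -- hft : μ' t.val.1 = some base.val.2 = some m₁
  have htw : t.val.1 = w₀ := hμ' t.val.1 w₀ m₁ hft h1
  have := t.property.1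
  rw [htw, h0] at this
  cases this
end Unique

/-- With `w = w_1` (index `0` among the original women) and `m' = m'_1` (index `n`
among the extended men), the following are equivalent: (i) `w` is single in some
marriage between `W` and `M` that is stable with respect to the (possibly partial,
duplicate-free) profiles `wL`, `mL`; (ii) `w` and `m'` are married to each other
in some perfect marriage between `W ∪ W'` and `M ∪ M'` that is stable with respect
to the constructed full preference lists; (iii) `w` and `m'` are married to each
other in every such stable perfect marriage. -/
theorem single_iff_married_to_prime (n : ℕ) (hn : 0 < n)
    (wL : Fin n → List (Fin n)) (mL : Fin n → List (Fin n))
    (hw : ∀ i, (wL i).Nodup) (hm : ∀ j, (mL j).Nodup) :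
    ((∃ μ : Fin n → Option (Fin n),
        IsMarriage μ ∧ StableL wL mL μ ∧ μ ⟨0, hn⟩ = none) ↔
      (∃ μ'' : Fin (n + n) → Option (Fin (n + n)),
        IsMarriage μ'' ∧ (∀ i, (μ'' i).isSome) ∧ (∀ j, ∃ i, μ'' i = some j) ∧
        StableL (extL n wL) (extL n mL) μ'' ∧
        μ'' (Fin.castAdd n ⟨0, hn⟩) = some (Fin.natAdd n ⟨0, hn⟩))) ∧
    ((∃ μ'' : Fin (n + n) → Option (Fin (n + n)),
        IsMarriage μ'' ∧ (∀ i, (μ'' i).isSome) ∧ (∀ j, ∃ i, μ'' i = some j) ∧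
        StableL (extL n wL) (extL n mL) μ'' ∧
        μ'' (Fin.castAdd n ⟨0, hn⟩) = some (Fin.natAdd n ⟨0, hn⟩)) ↔
      (∀ μ'' : Fin (n + n) → Option (Fin (n + n)),
        IsMarriage μ'' → (∀ i, (μ'' i).isSome) → (∀ j, ∃ i, μ'' i = some j) →
        StableL (extL n wL) (extL n mL) μ'' →
        μ'' (Fin.castAdd n ⟨0, hn⟩) = some (Fin.natAdd n ⟨0, hn⟩))) := by
  classical
  have hwExt : ∀ x, (extL n wL x).Nodup := nodup_extL n wL hw
  have hmExt : ∀ x, (extL n mL x).Nodup := nodup_extL n mL hm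
  obtain ⟨ν, hνM, hνS⟩ := exists_stable (extL n wL) (extL n mL) hwExt hmExt
  obtain ⟨hνsome, hνsurj⟩ := stable_perfect (extL n wL) (extL n mL)
    (fun i a => mem_extL n wL i a) (fun j a => mem_extL n mL j a) hνM hνS
  have key : ∀ (μ : Fin n → Option (Fin n)), IsMarriage μ → StableL wL mL μ → μ ⟨0, hn⟩ = none →
      ∀ (μ'' : Fin (n + n) → Option (Fin (n + n))), IsMarriage μ'' → (∀ i, (μ'' i).isSome) →
        StableL (extL n wL) (extL n mL) μ'' →
        μ'' (Fin.castAdd n ⟨0, hn⟩) = some (Fin.natAdd n ⟨0, hn⟩) := by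
    intro μ hM hS h0 μ'' hM'' hsome'' hst''
    obtain ⟨hrM, hrS, hp2⟩ := restr_stable n wL mL hM'' hst''
    have hrnone : restr μ'' ⟨0, hn⟩ = none := by
      cases hr : restr μ'' ⟨0, hn⟩ with
      | none => rfl
      | some j => exact (single_unique wL mL hw hm hM hrM hS hrS h0 hr).elim
    obtain ⟨x, hx⟩ := Option.isSome_iff_exists.1 (hsome'' (Fin.castAdd n ⟨0, hn⟩))
    rcases fin_sum_cases n x with ⟨j, rfl⟩ | ⟨c, rfl⟩
    · exact absurd ((restr_eq_some μ'' _ _).2 hx) (by rw [hrnone]; simp)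
    · obtain rfl : c = ⟨0, hn⟩ := hp2 _ _ hx
      exact hx
  constructor
  · constructor
    · rintro ⟨μ, hM, hS, h0⟩
      exact ⟨ν, hνM, hνsome, hνsurj, hνS, key μ hM hS h0 ν hνM hνsome hνS⟩
    · rintro ⟨μ'', hM, hsome, hsurj, hst, h00⟩
      obtain ⟨hrM, hrS, hp2⟩ := restr_stable n wL mL hM hst
      exact ⟨restr μ'', hrM, hrS, restr_eq_none μ'' _ _ h00⟩
  · constructor
    · rintro ⟨μ''₁, h₁M, h₁some, h₁surj, h₁st, h₁00⟩ μ'' hM hsome hsurj hst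
      obtain ⟨hr1M, hr1S, _⟩ := restr_stable n wL mL h₁M h₁st
      exact key (restr μ''₁) hr1M hr1S (restr_eq_none μ''₁ _ _ h₁00) μ'' hM hsome hst
    · intro hall
      exact ⟨ν, hνM, hνsome, hνsurj, hνS, hall ν hνM hνsome hνsurj hνS⟩
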